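/- If a $q$-aggregate sequence $\hat{\mathbf{y}}$ is also idiosyncratic, then $q = 0$, i.e., $\hat{\mathbf{y}}$ is the zero sequence. Consequently, a decomposition $\mathbf{y} = \hat{\mathbf{y}} + \tilde{\mathbf{y}}$ into an orthogonal sum of a $q$-aggregate and an idiosyncratic component is unique. -/
import Mathlib


open Filter MeasureTheory Matrix
open scoped RealInnerProductSpace

/-- The `n × n` covariance section of the sequence `v`. -/
noncomputable def covSec {Ω : Type*} [MeasurableSpace Ω] {μ : Measure Ω}
    (v : ℕ → Lp ℝ 2 μ) (n : ℕ) : Matrix (Fin n) (Fin n) ℝ :=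
  Matrix.of fun i j => ⟪v i, v j⟫

/-- The `k`-th largest eigenvalue of a symmetric matrix, via Courant–Fischer. -/
noncomputable def kthEig (n : ℕ) (A : Matrix (Fin n) (Fin n) ℝ) (k : ℕ) : ℝ :=
  sSup {t : ℝ | ∃ V : Submodule ℝ (Fin n → ℝ), Module.finrank ℝ V = k ∧
    ∀ x ∈ V, t * (∑ i, x i ^ 2) ≤ x ⬝ᵥ A.mulVec x}

/-- `v` is `q`-aggregate: its covariance sections have rank `q` and all `q` nonzero
eigenvalues tend to `+∞`. -/
noncomputable def IsAggregate {Ω : Type*} [MeasurableSpace Ω] {μ : Measure Ω}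
    (q : ℕ) (v : ℕ → Lp ℝ 2 μ) : Prop :=
  (∀ n, q ≤ n → (covSec v n).rank = q) ∧
  (∀ k, 1 ≤ k → k ≤ q → Tendsto (fun n => kthEig n (covSec v n) k) atTop atTop)

/-- `v` is idiosyncratic, via the eigenvalue characterization: the top eigenvalues of
its covariance sections stay bounded. -/
def IsIdiosyncraticCov {Ω : Type*} [MeasurableSpace Ω] {μ : Measure Ω}
    (v : ℕ → Lp ℝ 2 μ) : Prop :=
  ∃ M : ℝ, ∀ (n : ℕ) (x : Fin n → ℝ),
    x ⬝ᵥ (covSec v n).mulVec x ≤ M * ∑ i, x i ^ 2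

section helpers
variable {Ω : Type*} [MeasurableSpace Ω] {μ : Measure Ω}

noncomputable def phiMap (v : ℕ → Lp ℝ 2 μ) (n : ℕ) : (Fin n → ℝ) →ₗ[ℝ] Lp ℝ 2 μ where
  toFun x := ∑ i : Fin n, x i • v (i : ℕ)
  map_add' x y := by simp [add_smul, Finset.sum_add_distrib]
  map_smul' c x := by simp [smul_smul, Finset.smul_sum]

lemma mulVec_covSec (v : ℕ → Lp ℝ 2 μ) (n : ℕ) (x : Fin n → ℝ) (i : Fin n) :
    (covSec v n).mulVec x i = ⟪v i, phiMap v n x⟫ := by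
  simp only [Matrix.mulVec, dotProduct, covSec, phiMap, inner_sum, real_inner_smul_right,
    Matrix.of_apply, LinearMap.coe_mk, AddHom.coe_mk]
  exact Finset.sum_congr rfl fun l _ => mul_comm _ _

lemma quad_covSec (v : ℕ → Lp ℝ 2 μ) (n : ℕ) (x : Fin n → ℝ) :
    x ⬝ᵥ (covSec v n).mulVec x = ‖phiMap v n x‖ ^ 2 := by
  have h : x ⬝ᵥ (covSec v n).mulVec x = ⟪phiMap v n x, phiMap v n x⟫ := by
    simp only [dotProduct, mulVec_covSec]
    rw [show (phiMap v n x : Lp ℝ 2 μ) = ∑ i : Fin n, x i • v (i : ℕ) from rfl]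
    rw [sum_inner]
    exact Finset.sum_congr rfl fun i _ => by rw [real_inner_smul_left]
  rw [h, real_inner_self_eq_norm_sq]

lemma ker_phiMap (v : ℕ → Lp ℝ 2 μ) (n : ℕ) :
    LinearMap.ker ((covSec v n).mulVecLin) = LinearMap.ker (phiMap v n) := by
  ext x
  simp only [LinearMap.mem_ker, Matrix.mulVecLin_apply]
  constructor
  · intro h
    have h2 : x ⬝ᵥ (covSec v n).mulVec x = 0 := by rw [h]; simp
    rw [quad_covSec] at h2
    have h3 : ‖phiMap v n x‖ = 0 := by nlinarith [norm_nonneg (phiMap v n x)]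
    simpa using h3
  · intro h
    funext i
    rw [mulVec_covSec, h, inner_zero_right]
    rfl

lemma rank_covSec (v : ℕ → Lp ℝ 2 μ) (n : ℕ) :
    (covSec v n).rank = Module.finrank ℝ (LinearMap.range (phiMap v n)) := by
  have h1 := LinearMap.finrank_range_add_finrank_ker ((covSec v n).mulVecLin)
  have h2 := LinearMap.finrank_range_add_finrank_ker (phiMap v n)
  rw [ker_phiMap] at h1
  rw [Matrix.rank]
  omega

lemma phiMap_single (v : ℕ → Lp ℝ 2 μ) (n : ℕ) (j : Fin n) :
    phiMap v n (Pi.single j 1) = v j := by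
  rw [show phiMap v n (Pi.single j 1) = ∑ i : Fin n, (Pi.single j 1 : Fin n → ℝ) i • v (i : ℕ) from rfl]
  simp [Pi.single_apply, ite_smul]

lemma eq_zero_of_rank_covSec (v : ℕ → Lp ℝ 2 μ) (k : ℕ)
    (h : (covSec v (k+1)).rank = 0) : v k = 0 := by
  rw [rank_covSec] at h
  have hbot : LinearMap.range (phiMap v (k+1)) = ⊥ := Submodule.finrank_eq_zero.mp h
  have hm : v k ∈ LinearMap.range (phiMap v (k+1)) :=
    ⟨Pi.single (⟨k, k.lt_succ_self⟩ : Fin (k+1)) 1, phiMap_single v (k+1) _⟩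
  rw [hbot] at hm
  simpa using hm

lemma kthEig_le_of_bdd (n : ℕ) (A : Matrix (Fin n) (Fin n) ℝ) (k : ℕ) (hk : 1 ≤ k)
    (M : ℝ) (hM : ∀ x : Fin n → ℝ, x ⬝ᵥ A.mulVec x ≤ M * ∑ i, x i ^ 2) :
    kthEig n A k ≤ max M 0 := by
  apply Real.sSup_le _ (le_max_right _ _)
  rintro t ⟨V, hVr, hVq⟩
  have hVne : V ≠ ⊥ := by
    intro h
    rw [h, finrank_bot] at hVr
    omega
  obtain ⟨x, hxV, hx0⟩ := Submodule.exists_mem_ne_zero_of_ne_bot hVne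
  have hS : 0 < ∑ i, x i ^ 2 := by
    obtain ⟨i, hi⟩ := Function.ne_iff.mp hx0
    have : 0 < x i ^ 2 := (sq_nonneg _).lt_of_ne (Ne.symm (pow_ne_zero 2 hi))
    exact Finset.sum_pos' (fun i _ => sq_nonneg _) ⟨i, Finset.mem_univ i, this⟩
  have h1 : t * (∑ i, x i ^ 2) ≤ M * ∑ i, x i ^ 2 := (hVq x hxV).trans (hM x)
  have ht : t ≤ M := le_of_mul_le_mul_right (by linarith [h1]) hS
  exact ht.trans (le_max_left _ _)

lemma part1 (q : ℕ) (v : ℕ → Lp ℝ 2 μ)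
    (hA : IsAggregate q v) (hI : IsIdiosyncraticCov v) : q = 0 ∧ ∀ k, v k = 0 := by
  obtain ⟨M, hM⟩ := hI
  have hq : q = 0 := by
    by_contra hq0
    have h1 := hA.2 1 le_rfl (Nat.one_le_iff_ne_zero.mpr hq0)
    obtain ⟨n, hn⟩ := (h1.eventually_gt_atTop (max M 0)).exists
    exact absurd (kthEig_le_of_bdd n (covSec v n) 1 le_rfl M (hM n)) (not_le.mpr hn)
  refine ⟨hq, fun k => ?_⟩
  have hr := hA.1 (k+1) (by omega)
  rw [hq] at hr
  exact eq_zero_of_rank_covSec v k hr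


lemma key_arith (M₁' M₂' T S N C c a b : ℝ) (hM₁'nn : 0 ≤ M₁') (hM₂'nn : 0 ≤ M₂')
    (hS0 : 0 ≤ S) (hT : 0 ≤ T) (ha : 0 ≤ a) (hb : 0 ≤ b)
    (ha2 : a ^ 2 ≤ M₁' * S) (hb2 : b ^ 2 ≤ M₂' * S)
    (hcabs : |c| ≤ (b + a) * T) (hNS : N * S ≤ C ^ 2) (hN : 0 ≤ N) :
    c ^ 2 * N ≤ 2 * (M₁' + M₂') * T ^ 2 * C ^ 2 := by
  have h1 : c ^ 2 ≤ ((b + a) * T) ^ 2 := by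
    nlinarith [mul_self_le_mul_self (abs_nonneg c) hcabs, sq_abs c]
  have h2 : (b + a) ^ 2 ≤ 2 * (M₁' + M₂') * S := by nlinarith [sq_nonneg (a - b)]
  have hc2 : c ^ 2 ≤ 2 * (M₁' + M₂') * T ^ 2 * S := by
    nlinarith [mul_le_mul_of_nonneg_right h2 (sq_nonneg T)]
  calc c ^ 2 * N ≤ (2 * (M₁' + M₂') * T ^ 2 * S) * N := mul_le_mul_of_nonneg_right hc2 hN
    _ = (2 * (M₁' + M₂') * T ^ 2) * (N * S) := by ring
    _ ≤ (2 * (M₁' + M₂') * T ^ 2) * C ^ 2 := mul_le_mul_of_nonneg_left hNS (by positivity)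
    _ = 2 * (M₁' + M₂') * T ^ 2 * C ^ 2 := by ring

lemma key (q₁ : ℕ) (yh₁ yt₁ yh₂ yt₂ : ℕ → Lp ℝ 2 μ)
    (hA : IsAggregate q₁ yh₁)
    (hI1 : IsIdiosyncraticCov yt₁) (hI2 : IsIdiosyncraticCov yt₂)
    (ho2 : ∀ j k, ⟪yh₂ j, yt₂ k⟫ = 0)
    (hsum : ∀ k, yh₁ k + yt₁ k = yh₂ k + yt₂ k)
    (j k : ℕ) : ⟪yh₁ j, yt₂ k⟫ = 0 := by
  rcases Nat.eq_zero_or_pos q₁ with hq0 | hq1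
  · have hr := hA.1 (j+1) (by omega)
    rw [hq0] at hr
    rw [eq_zero_of_rank_covSec yh₁ j hr]
    exact inner_zero_left _
  obtain ⟨M₁, hM₁⟩ := hI1
  obtain ⟨M₂, hM₂⟩ := hI2
  set M₁' := max M₁ 0 with hM₁'def
  set M₂' := max M₂ 0 with hM₂'def
  have hM₁'nn : 0 ≤ M₁' := le_max_right _ _
  have hM₂'nn : 0 ≤ M₂' := le_max_right _ _
  have hM₁' : ∀ (n : ℕ) (x : Fin n → ℝ), x ⬝ᵥ (covSec yt₁ n).mulVec x ≤ M₁' * ∑ i, x i ^ 2 :=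
    fun n x => (hM₁ n x).trans (mul_le_mul_of_nonneg_right (le_max_left _ _)
      (Finset.sum_nonneg fun i _ => sq_nonneg _))
  have hM₂' : ∀ (n : ℕ) (x : Fin n → ℝ), x ⬝ᵥ (covSec yt₂ n).mulVec x ≤ M₂' * ∑ i, x i ^ 2 :=
    fun n x => (hM₂ n x).trans (mul_le_mul_of_nonneg_right (le_max_left _ _)
      (Finset.sum_nonneg fun i _ => sq_nonneg _))
  set c := (⟪yh₁ j, yt₂ k⟫ : ℝ) with hcdef
  set T := ‖yt₂ k‖ with hTdef
  set C := ‖yh₁ j‖ with hCdef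
  set D := 2 * (M₁' + M₂') * T ^ 2 * C ^ 2 with hDdef
  have hDnn : 0 ≤ D := by positivity
  have hbound : ∀ N : ℝ, 0 < N → c ^ 2 * N ≤ D := by
    intro N hN
    obtain ⟨n, hkE, hn⟩ := (((hA.2 q₁ hq1 le_rfl).eventually_gt_atTop N).and
      (eventually_ge_atTop (max (j+1) q₁))).exists
    have hjn : j < n := lt_of_lt_of_le (Nat.lt_succ_self j) ((le_max_left _ _).trans hn)
    have hqn : q₁ ≤ n := (le_max_right _ _).trans hn
    -- extract a subspace from the sSup
    unfold kthEig at hkE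
    have hex : ∃ t ∈ {t : ℝ | ∃ V : Submodule ℝ (Fin n → ℝ), Module.finrank ℝ V = q₁ ∧
        ∀ x ∈ V, t * (∑ i, x i ^ 2) ≤ x ⬝ᵥ (covSec yh₁ n).mulVec x}, N < t := by
      by_cases hb : BddAbove {t : ℝ | ∃ V : Submodule ℝ (Fin n → ℝ), Module.finrank ℝ V = q₁ ∧
          ∀ x ∈ V, t * (∑ i, x i ^ 2) ≤ x ⬝ᵥ (covSec yh₁ n).mulVec x}
      · by_contra hcon
        push_neg at hcon
        have hle := Real.sSup_le (fun t ht => hcon t ht) hN.le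
        exact absurd hkE (not_lt.mpr hle)
      · obtain ⟨t, ht, hlt⟩ := (not_bddAbove_iff.mp hb) N
        exact ⟨t, ht, hlt⟩
    obtain ⟨t, ⟨V, hVr, hVq⟩, htN⟩ := hex
    have hVN : ∀ x ∈ V, N * (∑ i, x i ^ 2) ≤ ‖phiMap yh₁ n x‖ ^ 2 := by
      intro x hx
      have h0 : (0:ℝ) ≤ ∑ i, x i ^ 2 := Finset.sum_nonneg fun i _ => sq_nonneg _
      calc N * (∑ i, x i ^ 2) ≤ t * (∑ i, x i ^ 2) := mul_le_mul_of_nonneg_right htN.le h0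
        _ ≤ x ⬝ᵥ (covSec yh₁ n).mulVec x := hVq x hx
        _ = ‖phiMap yh₁ n x‖ ^ 2 := quad_covSec yh₁ n x
    -- phiMap restricted to V is injective
    have hinj : Function.Injective ((phiMap yh₁ n).domRestrict V) := by
      rw [← LinearMap.ker_eq_bot]
      rw [Submodule.eq_bot_iff]
      rintro ⟨x, hxV⟩ hx
      have hphix : phiMap yh₁ n x = 0 := hx
      have h1 := hVN x hxV
      rw [hphix] at h1
      simp only [norm_zero] at h1
      have hS0 : (0:ℝ) ≤ ∑ i, x i ^ 2 := Finset.sum_nonneg fun i _ => sq_nonneg _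
      have hS : ∑ i, x i ^ 2 = 0 := by nlinarith
      have hx0 : x = 0 := by
        funext i
        have := (Finset.sum_eq_zero_iff_of_nonneg (fun i _ => sq_nonneg (x i))).mp hS i
          (Finset.mem_univ i)
        exact pow_eq_zero_iff (by norm_num) |>.mp this
      exact Subtype.ext hx0
    have hrange : Module.finrank ℝ (LinearMap.range ((phiMap yh₁ n).domRestrict V)) = q₁ := by
      rw [LinearMap.finrank_range_of_inj hinj, hVr]
    rw [LinearMap.range_domRestrict] at hrange
    have hrk : Module.finrank ℝ (LinearMap.range (phiMap yh₁ n)) = q₁ := by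
      rw [← rank_covSec]
      exact hA.1 n hqn
    have hmapeq : Submodule.map (phiMap yh₁ n) V = LinearMap.range (phiMap yh₁ n) :=
      Submodule.eq_of_le_of_finrank_le (LinearMap.map_le_range) (by rw [hrange, hrk])
    have hmem : yh₁ j ∈ Submodule.map (phiMap yh₁ n) V := by
      rw [hmapeq]
      exact ⟨Pi.single (⟨j, hjn⟩ : Fin n) 1, phiMap_single yh₁ n _⟩
    obtain ⟨x, hxV, hφx⟩ := hmem
    set S := (∑ i, x i ^ 2 : ℝ) with hSdef
    have hS0 : (0:ℝ) ≤ S := Finset.sum_nonneg fun i _ => sq_nonneg _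
    have hNS : N * S ≤ C ^ 2 := by
      have := hVN x hxV
      rw [hφx] at this
      exact this
    -- rewrite c
    have hc : c = ⟪phiMap yt₂ n x, yt₂ k⟫ - ⟪phiMap yt₁ n x, yt₂ k⟫ := by
      rw [hcdef, ← hφx]
      rw [show (phiMap yh₁ n x : Lp ℝ 2 μ) = ∑ i : Fin n, x i • yh₁ (i : ℕ) from rfl,
        show (phiMap yt₂ n x : Lp ℝ 2 μ) = ∑ i : Fin n, x i • yt₂ (i : ℕ) from rfl,
        show (phiMap yt₁ n x : Lp ℝ 2 μ) = ∑ i : Fin n, x i • yt₁ (i : ℕ) from rfl]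
      rw [sum_inner, sum_inner, sum_inner, ← Finset.sum_sub_distrib]
      refine Finset.sum_congr rfl fun i _ => ?_
      rw [real_inner_smul_left, real_inner_smul_left, real_inner_smul_left]
      have hyd : yh₁ (i : ℕ) = yh₂ i + yt₂ i - yt₁ i := by
        have h := hsum (i : ℕ)
        rw [eq_sub_iff_add_eq]
        rw [← h]
      rw [hyd, inner_sub_left, inner_add_left, ho2 i k]
      try ring
    set a := ‖phiMap yt₁ n x‖ with hadef
    set b := ‖phiMap yt₂ n x‖ with hbdef
    have hann : 0 ≤ a := norm_nonneg _
    have hbnn : 0 ≤ b := norm_nonneg _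
    have ha2 : a ^ 2 ≤ M₁' * S := by rw [hadef, ← quad_covSec]; exact hM₁' n x
    have hb2 : b ^ 2 ≤ M₂' * S := by rw [hbdef, ← quad_covSec]; exact hM₂' n x
    have hcabs : |c| ≤ (b + a) * T := by
      rw [hc]
      calc |⟪phiMap yt₂ n x, yt₂ k⟫ - ⟪phiMap yt₁ n x, yt₂ k⟫|
          ≤ |(⟪phiMap yt₂ n x, yt₂ k⟫ : ℝ)| + |(⟪phiMap yt₁ n x, yt₂ k⟫ : ℝ)| := abs_sub _ _
        _ ≤ b * T + a * T := add_le_add (abs_real_inner_le_norm _ _) (abs_real_inner_le_norm _ _)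
        _ = (b + a) * T := by ring
    have hTnn : 0 ≤ T := norm_nonneg _
    exact key_arith M₁' M₂' T S N C c a b hM₁'nn hM₂'nn hS0 hTnn hann hbnn ha2 hb2 hcabs hNS hN.le
  -- conclude c = 0
  by_contra hc0
  have hcpos : 0 < c ^ 2 := (sq_nonneg c).lt_of_ne (Ne.symm (pow_ne_zero 2 hc0))
  have hb := hbound ((D + 1) / c ^ 2) (by positivity)
  rw [mul_div_cancel₀ _ (ne_of_gt hcpos)] at hb
  linarith
end helpers

/-- a `q`-aggregate sequence which is also idiosyncratic must be zero
(`q = 0`); consequently an orthogonal decomposition `y = ŷ + ỹ` into a `q`-aggregate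
plus an idiosyncratic component is unique. -/
theorem aggregate_idiosyncratic_unique
    {Ω : Type*} [MeasurableSpace Ω] (μ : Measure Ω) [IsProbabilityMeasure μ] :
    (∀ (q : ℕ) (v : ℕ → Lp ℝ 2 μ),
      IsAggregate q v → IsIdiosyncraticCov v → q = 0 ∧ ∀ k, v k = 0) ∧
    (∀ (y : ℕ → Lp ℝ 2 μ) (q₁ q₂ : ℕ)
        (yh₁ yt₁ yh₂ yt₂ : ℕ → Lp ℝ 2 μ),
      IsAggregate q₁ yh₁ → IsIdiosyncraticCov yt₁ →
      (∀ j k, ⟪yh₁ j, yt₁ k⟫ = 0) →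
      (∀ k, y k = yh₁ k + yt₁ k) →
      IsAggregate q₂ yh₂ → IsIdiosyncraticCov yt₂ →
      (∀ j k, ⟪yh₂ j, yt₂ k⟫ = 0) →
      (∀ k, y k = yh₂ k + yt₂ k) →
      q₁ = q₂ ∧ ∀ k, yh₁ k = yh₂ k) := by
  constructor
  · exact fun q v hA hI => part1 q v hA hI
  · intro y q₁ q₂ yh₁ yt₁ yh₂ yt₂ hA1 hI1 ho1 hy1 hA2 hI2 ho2 hy2
    have hsum : ∀ k, yh₁ k + yt₁ k = yh₂ k + yt₂ k := fun k => by rw [← hy1 k, ← hy2 k]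
    have k12 : ∀ j k, (⟪yh₁ j, yt₂ k⟫ : ℝ) = 0 := key q₁ yh₁ yt₁ yh₂ yt₂ hA1 hI1 hI2 ho2 hsum
    have k21 : ∀ j k, (⟪yh₂ j, yt₁ k⟫ : ℝ) = 0 :=
      key q₂ yh₂ yt₂ yh₁ yt₁ hA2 hI2 hI1 ho1 (fun k => (hsum k).symm)
    have heq : ∀ k, yh₁ k = yh₂ k := by
      intro k
      have hd : yh₁ k - yh₂ k = yt₂ k - yt₁ k := by
        have h := hsum k
        rw [sub_eq_sub_iff_add_eq_add]
        rw [h]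
        abel
      have hz : (⟪yh₁ k - yh₂ k, yh₁ k - yh₂ k⟫ : ℝ) = 0 := by
        nth_rewrite 2 [hd]
        rw [inner_sub_left, inner_sub_right, inner_sub_right]
        rw [k12 k k, k21 k k, ho1 k k, ho2 k k]
        ring
      have := inner_self_eq_zero.mp hz
      exact sub_eq_zero.mp this
    refine ⟨?_, heq⟩
    have h1 := hA1.1 (max q₁ q₂) (le_max_left _ _)
    have h2 := hA2.1 (max q₁ q₂) (le_max_right _ _)
    have hcs : covSec yh₁ (max q₁ q₂) = covSec yh₂ (max q₁ q₂) := by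
      ext i jj
      simp [covSec, heq]
    rw [hcs, h2] at h1
    exact h1.symm
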